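/- For every integer n ≥ 0 and every k ∈ ℤ, the n-th coefficient of the formal power series ∑_{m=0}^{n} (1 - exp(-X))^m · (αm + a)^{-k} in ℂ⟦X⟧, multiplied by n!, equals (-1)^n ∑_{m=0}^{n} (-1)^m · m! · {n m} · (αm + a)^{-k}. (Since (1 - exp(-X))^m has X-adic order m, the terms with m > n contribute nothing to the coefficient of X^n, so this finite sum computes the coefficient of X^n in the generating function Φ(1 - e^{-t}, k, α, a) = ∑_{m=0}^{∞} (1-e^{-t})^m/(αm+a)^k of the two-parameter Hurwitz-Lerch type poly-Bernoulli numbers.) -/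

import Mathlib

open PowerSeries Finset

/-- Unsigned Stirling numbers of the first kind. -/
def stirling1 : ℕ → ℕ → ℕ
  | 0, 0 => 1
  | 0, _ + 1 => 0
  | _ + 1, 0 => 0
  | n + 1, m + 1 => stirling1 n m + n * stirling1 n (m + 1)

/-- Stirling numbers of the second kind. -/
def stirling2 : ℕ → ℕ → ℕ
  | 0, 0 => 1
  | 0, _ + 1 => 0
  | _ + 1, 0 => 0
  | n + 1, m + 1 => stirling2 n m + (m + 1) * stirling2 n (m + 1)

/-- Two-parameter Hurwitz-Lerch type poly-Bernoulli numbers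
    `B_n^{(k)}(α,a) = (-1)^n ∑_{m=0}^n (-1)^m m! {n m} (αm+a)^{-k}`. -/
noncomputable def polyBernoulli (k : ℤ) (α a : ℂ) (n : ℕ) : ℂ :=
  (-1 : ℂ) ^ n * ∑ m ∈ Finset.range (n + 1),
    (-1 : ℂ) ^ m * (m.factorial : ℂ) * (stirling2 n m : ℂ) * (α * m + a) ^ (-k)

/-- Two-parameter Hurwitz-Lerch type poly-Cauchy numbers of the first kind
    `c_n^{(k)}(α,a) = (-1)^n ∑_{m=0}^n (-1)^m [n m] (αm+a)^{-k}`. -/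
noncomputable def polyCauchy1 (k : ℤ) (α a : ℂ) (n : ℕ) : ℂ :=
  (-1 : ℂ) ^ n * ∑ m ∈ Finset.range (n + 1),
    (-1 : ℂ) ^ m * (stirling1 n m : ℂ) * (α * m + a) ^ (-k)

/-- Two-parameter Hurwitz-Lerch type poly-Cauchy numbers of the second kind
    `ĉ_n^{(k)}(α,a) = (-1)^n ∑_{m=0}^n [n m] (αm+a)^{-k}`. -/
noncomputable def polyCauchy2 (k : ℤ) (α a : ℂ) (n : ℕ) : ℂ :=
  (-1 : ℂ) ^ n * ∑ m ∈ Finset.range (n + 1),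
    (stirling1 n m : ℂ) * (α * m + a) ^ (-k)

/-- The formal power series `log(1+X) = ∑_{j≥1} (-1)^{j-1} X^j / j` in `ℂ⟦X⟧`. -/
noncomputable def formalLog : PowerSeries ℂ :=
  PowerSeries.mk fun j => if j = 0 then 0 else (-1 : ℂ) ^ (j - 1) / j


lemma derivative_exp' : d⁄dX ℂ (PowerSeries.exp ℂ) = PowerSeries.exp ℂ := by
  ext n
  rw [PowerSeries.coeff_derivative, PowerSeries.coeff_exp, PowerSeries.coeff_exp]
  simp only [map_div₀, map_one, map_natCast]
  rw [Nat.factorial_succ]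
  have h1 : ((n : ℂ) + 1) ≠ 0 := Nat.cast_add_one_ne_zero n
  have h2 : (n.factorial : ℂ) ≠ 0 := Nat.cast_ne_zero.mpr n.factorial_ne_zero
  push_cast
  field_simp

lemma derivative_expm1 : d⁄dX ℂ (PowerSeries.exp ℂ - 1) = PowerSeries.exp ℂ := by
  rw [map_sub, derivative_exp']
  simp

lemma key_stirling2 (n : ℕ) : ∀ m : ℕ,
    (n.factorial : ℂ) * PowerSeries.coeff (R := ℂ) n ((PowerSeries.exp ℂ - 1) ^ m) =
      (m.factorial : ℂ) * (stirling2 n m : ℂ) := by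
  induction n with
  | zero =>
    intro m
    rw [PowerSeries.coeff_zero_eq_constantCoeff, map_pow, map_sub, map_one,
      PowerSeries.constantCoeff_exp, sub_self]
    cases m with
    | zero => simp [stirling2]
    | succ m => simp [stirling2, zero_pow]
  | succ n ih =>
    intro m
    cases m with
    | zero => simp [stirling2, PowerSeries.coeff_one]
    | succ m =>
      have hD : d⁄dX ℂ ((PowerSeries.exp ℂ - 1) ^ (m + 1)) =
          (m + 1) • ((PowerSeries.exp ℂ - 1) ^ (m + 1) + (PowerSeries.exp ℂ - 1) ^ m) := by
        rw [Derivation.leibniz_pow, derivative_expm1]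
        congr 1
        rw [smul_eq_mul, Nat.add_sub_cancel]
        have h : PowerSeries.exp ℂ = (PowerSeries.exp ℂ - 1) + 1 := by ring
        rw [h]
        ring
      have hc := PowerSeries.coeff_derivative ((PowerSeries.exp ℂ - 1) ^ (m + 1)) n
      rw [hD, map_nsmul, nsmul_eq_mul, map_add] at hc
      push_cast at hc
      have hrec : (PowerSeries.coeff (R := ℂ) (n + 1)) ((PowerSeries.exp ℂ - 1) ^ (m + 1)) * ((n : ℂ) + 1) =
          ((m : ℂ) + 1) * ((PowerSeries.coeff (R := ℂ) n) ((PowerSeries.exp ℂ - 1) ^ (m + 1)) +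
            (PowerSeries.coeff (R := ℂ) n) ((PowerSeries.exp ℂ - 1) ^ m)) := hc.symm
      have h1 := ih (m + 1)
      have h2 := ih m
      rw [Nat.factorial_succ] at h1
      push_cast at h1 h2
      have hst : (stirling2 (n + 1) (m + 1) : ℂ) =
          (stirling2 n m : ℂ) + ((m : ℂ) + 1) * (stirling2 n (m + 1) : ℂ) := by
        rw [show stirling2 (n + 1) (m + 1) = stirling2 n m + (m + 1) * stirling2 n (m + 1) from rfl]
        push_cast; ring
      rw [Nat.factorial_succ (n := n), Nat.factorial_succ (n := m)]
      push_cast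
      rw [hst]
      linear_combination (n.factorial : ℂ) * hrec + ((m : ℂ) + 1) * h1 + ((m : ℂ) + 1) * h2

lemma coeff_one_sub_rescale (n m : ℕ) :
    PowerSeries.coeff (R := ℂ) n ((1 - PowerSeries.rescale (-1) (PowerSeries.exp ℂ)) ^ m) =
      (-1 : ℂ) ^ (n + m) * PowerSeries.coeff (R := ℂ) n ((PowerSeries.exp ℂ - 1) ^ m) := by
  have h : (1 - PowerSeries.rescale (-1) (PowerSeries.exp ℂ)) =
      - PowerSeries.rescale (-1) (PowerSeries.exp ℂ - 1) := by
    rw [map_sub, map_one]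
    ring
  rw [h, neg_pow, show ((-1 : ℂ⟦X⟧)) = PowerSeries.C (R := ℂ) (-1) by simp, ← map_pow,
    PowerSeries.coeff_C_mul, ← map_pow, PowerSeries.coeff_rescale, pow_add]
  ring

theorem stmt0 (α a : ℂ) (hα : α ≠ 0) (ha : ∀ m : ℕ, α * m + a ≠ 0) (n : ℕ) (k : ℤ) :
    (n.factorial : ℂ) * PowerSeries.coeff (R := ℂ) n
      (∑ m ∈ Finset.range (n + 1),
        PowerSeries.C (R := ℂ) ((α * m + a) ^ (-k)) *
          (1 - PowerSeries.rescale (-1) (PowerSeries.exp ℂ)) ^ m) =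
    (-1 : ℂ) ^ n * ∑ m ∈ Finset.range (n + 1),
      (-1 : ℂ) ^ m * (m.factorial : ℂ) * (stirling2 n m : ℂ) * (α * m + a) ^ (-k) := by
  simp only [map_sum, PowerSeries.coeff_C_mul, Finset.mul_sum]
  refine Finset.sum_congr rfl fun m _ => ?_
  rw [coeff_one_sub_rescale]
  have hk := key_stirling2 n m
  calc (n.factorial : ℂ) * ((α * m + a) ^ (-k) * ((-1 : ℂ) ^ (n + m) *
        PowerSeries.coeff (R := ℂ) n ((PowerSeries.exp ℂ - 1) ^ m)))
      = (α * m + a) ^ (-k) * (-1 : ℂ) ^ (n + m) *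
        ((n.factorial : ℂ) * PowerSeries.coeff (R := ℂ) n ((PowerSeries.exp ℂ - 1) ^ m)) := by ring
    _ = (α * m + a) ^ (-k) * (-1 : ℂ) ^ (n + m) *
        ((m.factorial : ℂ) * (stirling2 n m : ℂ)) := by rw [hk]
    _ = (-1 : ℂ) ^ n * ((-1 : ℂ) ^ m * (m.factorial : ℂ) * (stirling2 n m : ℂ) *
        (α * m + a) ^ (-k)) := by rw [pow_add]; ring
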